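/- Suppose f_2, f_3, … are functions from the positive integers to the positive integers satisfying: (i) f_2(n) ≤ n for all integers n ≥ 1; (ii) f_d(1) = 1 for all integers d ≥ 2; and (iii) for every integer d ≥ 3 there exists α_d ∈ ℕ such that for every integer n ≥ 8, f_d(n) ≤ α_d · [ f_d(⌈7n/8⌉) + f_{d−1}(2n^(d−1))² · Σ_{u=0}^{⌊log₂ n⌋−3} f_d(2^(u+1)) · f_d(⌈n/2^(u+1)⌉ + 1) ]. Then for every integer d ≥ 2 there exists a constant β_d ∈ ℕ such that f_d(n) ≤ 2^(β_d · (log₂ n)^(d−1)) for all positive integers n. -/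

import Mathlib

open Finset


lemma log_shift {m M j : ℕ} (hm : 1 ≤ m) (h : m * 2 ^ j ≤ M) :
    Nat.log 2 m + j ≤ Nat.log 2 M := by
  apply Nat.le_log_of_pow_le one_lt_two
  calc 2 ^ (Nat.log 2 m + j) = 2 ^ Nat.log 2 m * 2 ^ j := pow_add 2 _ _
    _ ≤ m * 2 ^ j := Nat.mul_le_mul_right _ (Nat.pow_log_le_self 2 (by omega))
    _ ≤ M := h

lemma convex_aux (t x c k : ℕ) (h : t ≤ x) :
    x ^ k + (t + c) ^ k ≤ t ^ k + (x + c) ^ k := by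
  rw [add_pow, add_pow, Finset.sum_range_succ, Finset.sum_range_succ]
  simp only [Nat.cast_id, Nat.sub_self, pow_zero, Nat.choose_self, mul_one]
  have hs : ∑ m ∈ Finset.range k, t ^ m * c ^ (k - m) * k.choose m ≤
      ∑ m ∈ Finset.range k, x ^ m * c ^ (k - m) * k.choose m :=
    Finset.sum_le_sum fun i _ =>
      Nat.mul_le_mul_right _ (Nat.mul_le_mul_right _ (Nat.pow_le_pow_left h i))
  omega

lemma binom_lb (q r j : ℕ) : q ^ (j + 1) + (j + 1) * r * q ^ j ≤ (q + r) ^ (j + 1) := by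
  induction j with
  | zero => simp
  | succ j ih =>
    have h2 : (q + r) * (q ^ (j + 1) + (j + 1) * r * q ^ j) ≤ (q + r) ^ (j + 1 + 1) := by
      rw [show (q + r) ^ (j + 1 + 1) = (q + r) * (q + r) ^ (j + 1) by ring]
      exact Nat.mul_le_mul_left _ ih
    have h3 : (q + r) * (q ^ (j + 1) + (j + 1) * r * q ^ j) =
        q ^ (j + 1 + 1) + (j + 1 + 1) * r * q ^ (j + 1) + (j + 1) * r * r * q ^ j := by ring
    omega

-- the inductive step, as a standalone lemma
lemma step_lemma (f : ℕ → ℕ → ℕ) (j : ℕ) (hj : 1 ≤ j)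
    (β' α : ℕ)
    (ihb : ∀ n : ℕ, 1 ≤ n → f (j + 1) n ≤ 2 ^ (β' * (Nat.log 2 (n ^ 6) + 1) ^ j))
    (hα : ∀ n : ℕ, 8 ≤ n →
      f (j + 2) n ≤ α * (f (j + 2) ((7 * n + 7) / 8) +
        (f (j + 1) (2 * n ^ (j + 1))) ^ 2 *
          ∑ u ∈ Finset.range (Nat.log 2 n - 2),
            f (j + 2) (2 ^ (u + 1)) * f (j + 2) ((n + 2 ^ (u + 1) - 1) / 2 ^ (u + 1) + 1))) :
    ∀ n : ℕ, 1 ≤ n →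
      f (j + 2) n ≤ 2 ^ ((α + 2 * β' * (12 * (j + 1)) ^ j +
        (Finset.range (2 ^ 684)).sup (f (j + 2)) + 3) * (Nat.log 2 (n ^ 6) + 1) ^ (j + 1)) := by
  set G := (Finset.range (2 ^ 684)).sup (f (j + 2)) with hG
  set C := 2 * β' * (12 * (j + 1)) ^ j with hC
  set β := α + C + G + 3 with hβ
  clear_value G C β
  intro n
  induction n using Nat.strong_induction_on with
  | _ n IHn =>
  intro hn
  by_cases hbig : n < 2 ^ 684
  · have h1 : f (j + 2) n ≤ G := by
      rw [hG]; exact Finset.le_sup (Finset.mem_range.mpr hbig)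
    have h2 : β < 2 ^ β := Nat.lt_two_pow_self (n := β)
    have h3 : (2 : ℕ) ^ β ≤ 2 ^ (β * (Nat.log 2 (n ^ 6) + 1) ^ (j + 1)) :=
      Nat.pow_le_pow_right (by norm_num)
        (Nat.le_mul_of_pos_right β (Nat.pow_pos (by omega)))
    omega
  · push_neg at hbig
    set L := Nat.log 2 n with hL
    have hL684 : 684 ≤ L := Nat.le_log_of_pow_le one_lt_two hbig
    have hn8 : 8 ≤ n := le_trans ((by norm_num : (8:ℕ) ≤ 2 ^ 3).trans (Nat.pow_le_pow_right (by norm_num) (by norm_num))) hbig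
    have hn105 : 105 ≤ n := le_trans ((by norm_num : (105:ℕ) ≤ 2 ^ 7).trans (Nat.pow_le_pow_right (by norm_num) (by norm_num))) hbig
    have hpowL : 2 ^ L ≤ n := Nat.pow_log_le_self 2 (by omega)
    have hnlt : n < 2 ^ (L + 1) := Nat.lt_pow_succ_log_self one_lt_two n
    set P := Nat.log 2 (n ^ 6) + 1 with hP
    have hP6 : 6 * L + 1 ≤ P := by
      have h0 : (2 : ℕ) ^ (6 * L) ≤ n ^ 6 := by
        calc (2 : ℕ) ^ (6 * L) = (2 ^ L) ^ 6 := by rw [← pow_mul, mul_comm]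
          _ ≤ n ^ 6 := Nat.pow_le_pow_left hpowL 6
      have := Nat.le_log_of_pow_le one_lt_two h0
      omega
    have hPbig : 4105 ≤ P := by omega
    obtain ⟨q1, hq1⟩ : ∃ q1, P = q1 + 1 := ⟨P - 1, by omega⟩
    obtain ⟨q5, hq5⟩ : ∃ q5, P = q5 + 5 := ⟨P - 5, by omega⟩
    have hq5big : 4100 ≤ q5 := by omega
    -- ===== A term =====
    set c7 := (7 * n + 7) / 8 with hc7
    have hc78 : 8 * c7 ≤ 7 * n + 7 := by
      rw [hc7, mul_comm]
      exact Nat.div_mul_le_self _ 8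
    have hc7lt : c7 < n := by
      rw [hc7]
      exact Nat.div_lt_of_lt_mul (by omega)
    have hc7ge : 1 ≤ c7 := by
      rw [hc7]
      exact (Nat.one_le_div_iff (by norm_num)).mpr (by omega)
    have hstep7 : Nat.log 2 (c7 ^ 6) + 1 ≤ q1 := by
      have h120 : 120 * c7 ≤ 106 * n := by omega
      have hp : (120 * c7) ^ 6 ≤ (106 * n) ^ 6 := Nat.pow_le_pow_left h120 6
      rw [mul_pow, mul_pow] at hp
      have h2c : 106 ^ 6 * (c7 ^ 6 * 2 ^ 1) ≤ 106 ^ 6 * n ^ 6 := by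
        have h1 : 106 ^ 6 * (c7 ^ 6 * 2 ^ 1) ≤ 120 ^ 6 * c7 ^ 6 := by
          calc 106 ^ 6 * (c7 ^ 6 * 2 ^ 1) = (106 ^ 6 * 2 ^ 1) * c7 ^ 6 := by ring
            _ ≤ 120 ^ 6 * c7 ^ 6 := Nat.mul_le_mul_right _ (by norm_num)
        exact h1.trans hp
      have h2c' : c7 ^ 6 * 2 ^ 1 ≤ n ^ 6 := Nat.le_of_mul_le_mul_left h2c (by norm_num)
      have := log_shift (pow_pos (show 0 < c7 from hc7ge) 6) h2c'
      omega
    have hA : f (j + 2) c7 ≤ 2 ^ (β * q1 ^ (j + 1)) := by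
      refine (IHn c7 hc7lt hc7ge).trans (Nat.pow_le_pow_right (by norm_num) ?_)
      exact Nat.mul_le_mul_left β (Nat.pow_le_pow_left hstep7 _)
    -- ===== B term =====
    have hBQ : Nat.log 2 ((2 * n ^ (j + 1)) ^ 6) + 1 ≤ 6 * (j + 1) * P := by
      have h1 : (2 * n ^ (j + 1)) ^ 6 = n ^ (6 * (j + 1)) * 2 ^ 6 := by
        rw [mul_pow, ← pow_mul, mul_comm (j + 1) 6, mul_comm]
      have h2 : n ^ (6 * (j + 1)) < 2 ^ (6 * (j + 1) * (L + 1)) := by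
        calc n ^ (6 * (j + 1)) < (2 ^ (L + 1)) ^ (6 * (j + 1)) :=
              Nat.pow_lt_pow_left hnlt (by positivity)
          _ = 2 ^ (6 * (j + 1) * (L + 1)) := by rw [← pow_mul, mul_comm]
      have h3 : (2 * n ^ (j + 1)) ^ 6 < 2 ^ (6 * (j + 1) * (L + 1) + 6) := by
        rw [h1, pow_add]
        exact mul_lt_mul_of_pos_right h2 (pow_pos (by norm_num : (0:ℕ) < 2) 6)
      have h4 := Nat.log_lt_of_lt_pow (Nat.pos_iff_ne_zero.mp (pow_pos (Nat.mul_pos (by norm_num) (pow_pos (by omega : 0 < n) (j + 1))) 6)) h3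
      -- log + 1 ≤ 6(j+1)(L+1) + 6 ≤ 6(j+1)P
      have h5 : 6 * (j + 1) * (L + 1) + 6 ≤ 6 * (j + 1) * P := by
        have e1 : 6 * (j + 1) * (L + 1) + 6 ≤ 6 * (j + 1) * (L + 2) := by nlinarith
        have e2 : 6 * (j + 1) * (L + 2) ≤ 6 * (j + 1) * P :=
          Nat.mul_le_mul_left _ (by omega)
        omega
      omega
    have hB2 : (f (j + 1) (2 * n ^ (j + 1))) ^ 2 ≤
        2 ^ (2 * β' * ((6 * (j + 1)) ^ j * P ^ j)) := by
      have hb1 : f (j + 1) (2 * n ^ (j + 1)) ≤ 2 ^ (β' * (6 * (j + 1) * P) ^ j) := by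
        refine (ihb (2 * n ^ (j + 1)) (Nat.mul_pos (by norm_num) (pow_pos (by omega : 0 < n) (j + 1)))).trans
          (Nat.pow_le_pow_right (by norm_num) ?_)
        exact Nat.mul_le_mul_left β' (Nat.pow_le_pow_left hBQ _)
      calc (f (j + 1) (2 * n ^ (j + 1))) ^ 2 ≤ (2 ^ (β' * (6 * (j + 1) * P) ^ j)) ^ 2 :=
            Nat.pow_le_pow_left hb1 2
        _ = 2 ^ (2 * β' * ((6 * (j + 1)) ^ j * P ^ j)) := by
            rw [← pow_mul, mul_pow]; ring_nf
    -- ===== sum terms =====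
    have hterm : ∀ u ∈ Finset.range (L - 2),
        f (j + 2) (2 ^ (u + 1)) * f (j + 2) ((n + 2 ^ (u + 1) - 1) / 2 ^ (u + 1) + 1) ≤
          2 ^ (β * (q5 ^ (j + 1) + 64 ^ (j + 1))) := by
      intro u hu
      rw [Finset.mem_range] at hu
      have hu2 : u + 1 ≤ L - 2 := hu
      have hqlt : (2 : ℕ) ^ (u + 1) < n := by
        calc (2 : ℕ) ^ (u + 1) < 2 ^ L := Nat.pow_lt_pow_right (by norm_num) (by omega)
          _ ≤ n := hpowL
      have hx : Nat.log 2 ((2 ^ (u + 1)) ^ 6) + 1 = 6 * u + 7 := by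
        rw [← pow_mul, show (u + 1) * 6 = 6 * u + 6 by ring, Nat.log_pow one_lt_two]
      have hfq : f (j + 2) (2 ^ (u + 1)) ≤ 2 ^ (β * (6 * u + 7) ^ (j + 1)) := by
        have h := IHn (2 ^ (u + 1)) hqlt Nat.one_le_two_pow
        rwa [hx] at h
      have hq1' : 1 ≤ (2 : ℕ) ^ (u + 1) := Nat.one_le_two_pow
      have hdm : 2 ^ (u + 1) * ((n + 2 ^ (u + 1) - 1) / 2 ^ (u + 1)) ≤ n + 2 ^ (u + 1) - 1 := by
        rw [mul_comm]; exact Nat.div_mul_le_self _ _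
      obtain ⟨D, hD⟩ : ∃ D, D = (n + 2 ^ (u + 1) - 1) / 2 ^ (u + 1) := ⟨_, rfl⟩
      rw [← hD] at hdm ⊢
      clear hD
      set m := D + 1 with hm
      have hsub : n + 2 ^ (u + 1) - 1 + 1 = n + 2 ^ (u + 1) := by omega
      have hmq : 2 ^ (u + 1) * m ≤ n + 2 * 2 ^ (u + 1) := by
        have h0 : 2 ^ (u + 1) * m = 2 ^ (u + 1) * D + 2 ^ (u + 1) := by
          rw [hm, Nat.mul_add, mul_one]
        linarith only [h0, hdm, hsub]
      have hq4 : 4 * 2 ^ (u + 1) ≤ n := by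
        calc 4 * 2 ^ (u + 1) = 2 ^ (u + 1 + 2) := by ring
          _ ≤ 2 ^ L := Nat.pow_le_pow_right (by norm_num) (by omega)
          _ ≤ n := hpowL
      have hm1 : 1 ≤ m := by omega
      have hmlt : m < n := by
        by_contra hcon
        push_neg at hcon
        have h1 : 2 ^ (u + 1) * n ≤ 2 ^ (u + 1) * m := Nat.mul_le_mul_left _ hcon
        have h2 : 2 * n ≤ 2 ^ (u + 1) * n := Nat.mul_le_mul_right n (by
          calc (2 : ℕ) = 2 ^ 1 := rfl
            _ ≤ 2 ^ (u + 1) := Nat.pow_le_pow_right (by norm_num) (by omega))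
        linarith only [h1, h2, hmq, hq4, hq1']
      have hfm := IHn m hmlt hm1
      have hxy : (6 * u + 7) ^ (j + 1) + (Nat.log 2 (m ^ 6) + 1) ^ (j + 1) ≤
          q5 ^ (j + 1) + 64 ^ (j + 1) := by
        by_cases hcase : u + 6 ≤ L
        · have h32 : 32 * 2 ^ (u + 1) ≤ n := by
            calc 32 * 2 ^ (u + 1) = 2 ^ (u + 1 + 5) := by ring
              _ ≤ 2 ^ L := Nat.pow_le_pow_right (by norm_num) (by omega)
              _ ≤ n := hpowL
          have h16 : 16 * (2 ^ (u + 1) * m) ≤ 17 * n := by linarith only [hmq, h32]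
          have hp6 : (16 * (2 ^ (u + 1) * m)) ^ 6 ≤ (17 * n) ^ 6 := Nat.pow_le_pow_left h16 6
          rw [show (16 * (2 ^ (u + 1) * m)) ^ 6 = 16 ^ 6 * (2 ^ (u + 1) * m) ^ 6 from
            mul_pow 16 _ 6, show (17 * n) ^ 6 = 17 ^ 6 * n ^ 6 from mul_pow 17 n 6] at hp6
          have h2c : 16 ^ 6 * (2 ^ (u + 1) * m) ^ 6 ≤ 16 ^ 6 * (2 * n ^ 6) := by
            refine hp6.trans ?_
            rw [show (16 : ℕ) ^ 6 * (2 * n ^ 6) = (16 ^ 6 * 2) * n ^ 6 by ring]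
            exact Nat.mul_le_mul_right _ (by norm_num)
          have hqm6 : (2 ^ (u + 1) * m) ^ 6 ≤ 2 * n ^ 6 :=
            Nat.le_of_mul_le_mul_left h2c (by norm_num)
          have hm6 : m ^ 6 * 2 ^ (6 * u + 5) ≤ n ^ 6 := by
            have he : (2 ^ (u + 1) * m) ^ 6 = 2 * (m ^ 6 * 2 ^ (6 * u + 5)) := by
              rw [mul_pow, ← pow_mul, show (u + 1) * 6 = 6 * u + 5 + 1 by ring, pow_succ]
              ring
            linarith only [he, hqm6]
          have hshift := log_shift (pow_pos (show 0 < m by omega) 6) hm6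
          obtain ⟨c, hc⟩ : ∃ c, 6 * u + 7 + c = q5 := ⟨q5 - (6 * u + 7), by omega⟩
          have hcore := convex_aux 7 (6 * u + 7) c (j + 1) (by omega)
          have hyb : Nat.log 2 (m ^ 6) + 1 ≤ 7 + c := by omega
          calc (6 * u + 7) ^ (j + 1) + (Nat.log 2 (m ^ 6) + 1) ^ (j + 1)
              ≤ (6 * u + 7) ^ (j + 1) + (7 + c) ^ (j + 1) :=
                Nat.add_le_add_left (Nat.pow_le_pow_left hyb _) _
            _ ≤ 7 ^ (j + 1) + (6 * u + 7 + c) ^ (j + 1) := hcore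
            _ ≤ 64 ^ (j + 1) + q5 ^ (j + 1) := by
                rw [hc]
                exact Nat.add_le_add_right (Nat.pow_le_pow_left (by norm_num) _) _
            _ = q5 ^ (j + 1) + 64 ^ (j + 1) := by ring
        · push_neg at hcase
          have hnq : n < 32 * 2 ^ (u + 1) := by
            calc n < 2 ^ (L + 1) := hnlt
              _ ≤ 2 ^ (u + 6) := Nat.pow_le_pow_right (by norm_num) (by omega)
              _ = 32 * 2 ^ (u + 1) := by ring
          have hm33 : m ≤ 33 := by
            by_contra hcon
            push_neg at hcon
            have h1 : 2 ^ (u + 1) * 34 ≤ 2 ^ (u + 1) * m := Nat.mul_le_mul_left _ hcon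
            linarith only [h1, hmq, hnq]
          have hym : Nat.log 2 (m ^ 6) < 31 := by
            apply Nat.log_lt_of_lt_pow (Nat.pos_iff_ne_zero.mp (pow_pos (by omega) 6))
            calc m ^ 6 ≤ 33 ^ 6 := Nat.pow_le_pow_left hm33 6
              _ < 2 ^ 31 := by norm_num
          have hxq : 6 * u + 7 ≤ q5 := by omega
          exact Nat.add_le_add (Nat.pow_le_pow_left hxq _) (Nat.pow_le_pow_left (by omega) _)
      calc f (j + 2) (2 ^ (u + 1)) * f (j + 2) m
          ≤ 2 ^ (β * (6 * u + 7) ^ (j + 1)) * 2 ^ (β * (Nat.log 2 (m ^ 6) + 1) ^ (j + 1)) :=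
            Nat.mul_le_mul hfq hfm
        _ = 2 ^ (β * ((6 * u + 7) ^ (j + 1) + (Nat.log 2 (m ^ 6) + 1) ^ (j + 1))) := by
            rw [← pow_add, Nat.mul_add]
        _ ≤ 2 ^ (β * (q5 ^ (j + 1) + 64 ^ (j + 1))) :=
            Nat.pow_le_pow_right (by norm_num) (Nat.mul_le_mul_left β hxy)
    -- ===== sum bound =====
    have hcard : L - 2 ≤ 2 ^ P := by
      have h1 : L < 2 ^ L := Nat.lt_two_pow_self (n := L)
      have h2 : (2 : ℕ) ^ L ≤ 2 ^ P := Nat.pow_le_pow_right (by norm_num) (by omega)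
      omega
    have hS : ∑ u ∈ Finset.range (L - 2),
        f (j + 2) (2 ^ (u + 1)) * f (j + 2) ((n + 2 ^ (u + 1) - 1) / 2 ^ (u + 1) + 1) ≤
          2 ^ P * 2 ^ (β * (q5 ^ (j + 1) + 64 ^ (j + 1))) := by
      have h1 := Finset.sum_le_card_nsmul _ _ _ hterm
      rw [Finset.card_range, smul_eq_mul] at h1
      exact h1.trans (Nat.mul_le_mul_right _ hcard)
    -- ===== exponent inequalities =====
    have hexpA : 1 + α + β * q1 ^ (j + 1) ≤ β * P ^ (j + 1) := by
      have hb1 := binom_lb q1 1 j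
      rw [← hq1] at hb1
      have h2 : 1 ≤ (j + 1) * 1 * q1 ^ j := by
        have hq1p := Nat.one_le_pow j q1 (show 0 < q1 by omega)
        calc 1 = 1 * 1 * 1 := by norm_num
          _ ≤ (j + 1) * 1 * q1 ^ j := Nat.mul_le_mul (Nat.mul_le_mul (by omega) le_rfl) hq1p
      have h3 : β * (q1 ^ (j + 1) + (j + 1) * 1 * q1 ^ j) ≤ β * P ^ (j + 1) :=
        Nat.mul_le_mul_left β hb1
      have h4 : β * 1 ≤ β * ((j + 1) * 1 * q1 ^ j) := Nat.mul_le_mul_left β h2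
      have h5 : β * (q1 ^ (j + 1) + (j + 1) * 1 * q1 ^ j) =
          β * q1 ^ (j + 1) + β * ((j + 1) * 1 * q1 ^ j) := by ring
      have hβα : α + 1 ≤ β := by omega
      linarith only [h3, h4, h5, hβα]
    have hexpS : 1 + α + (2 * β' * ((6 * (j + 1)) ^ j * P ^ j) +
        (P + β * (q5 ^ (j + 1) + 64 ^ (j + 1)))) ≤ β * P ^ (j + 1) := by
      have hb5 := binom_lb q5 5 j
      rw [← hq5] at hb5
      have hone : 1 ≤ q5 ^ j := Nat.one_le_pow _ _ (by omega)
      have c1 : 1 + α ≤ β * q5 ^ j := by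
        have h1 : β * 1 ≤ β * q5 ^ j := Nat.mul_le_mul_left β hone
        have hβα : α + 1 ≤ β := by omega
        linarith only [h1, hβα]
      have c2 : 2 * β' * ((6 * (j + 1)) ^ j * P ^ j) ≤ β * q5 ^ j := by
        have hPj : P ^ j ≤ 2 ^ j * q5 ^ j := by
          calc P ^ j ≤ (2 * q5) ^ j := Nat.pow_le_pow_left (by omega) j
            _ = 2 ^ j * q5 ^ j := mul_pow 2 q5 j
        have e1 : 2 * β' * ((6 * (j + 1)) ^ j * P ^ j) ≤
            2 * β' * ((6 * (j + 1)) ^ j * (2 ^ j * q5 ^ j)) :=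
          Nat.mul_le_mul_left _ (Nat.mul_le_mul_left _ hPj)
        have e2 : 2 * β' * ((6 * (j + 1)) ^ j * (2 ^ j * q5 ^ j)) = C * q5 ^ j := by
          rw [hC, show (12 * (j + 1)) ^ j = 2 ^ j * (6 * (j + 1)) ^ j by
            rw [← mul_pow]; ring_nf]
          ring
        have e3 : C * q5 ^ j ≤ β * q5 ^ j := Nat.mul_le_mul_right _ (by omega)
        linarith only [e1, e2, e3]
      have c3 : P ≤ β * q5 ^ j := by
        have h1 : q5 ≤ q5 ^ j := Nat.le_self_pow (by omega) q5
        have h2 : 2 * q5 ≤ β * q5 := Nat.mul_le_mul_right q5 (by omega)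
        have h3 : β * q5 ≤ β * q5 ^ j := Nat.mul_le_mul_left β h1
        linarith only [h2, h3, hq5, hq5big]
      have c4 : β * 64 ^ (j + 1) ≤ β * q5 ^ j := by
        apply Nat.mul_le_mul_left
        have h64 : (64 : ℕ) ≤ 64 ^ j := by
          calc (64 : ℕ) = 64 ^ 1 := (pow_one 64).symm
            _ ≤ 64 ^ j := Nat.pow_le_pow_right (by norm_num) (by omega)
        calc (64 : ℕ) ^ (j + 1) = 64 * 64 ^ j := by ring
          _ ≤ 64 ^ j * 64 ^ j := Nat.mul_le_mul_right _ h64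
          _ = 4096 ^ j := by rw [← mul_pow]; norm_num
          _ ≤ q5 ^ j := Nat.pow_le_pow_left (by omega) j
      have c5 : β * q5 ^ (j + 1) + 10 * (β * q5 ^ j) ≤ β * P ^ (j + 1) := by
        have h1 : β * (q5 ^ (j + 1) + (j + 1) * 5 * q5 ^ j) ≤ β * P ^ (j + 1) :=
          Nat.mul_le_mul_left β hb5
        have h2 : β * (q5 ^ (j + 1) + (j + 1) * 5 * q5 ^ j) =
            β * q5 ^ (j + 1) + (j + 1) * 5 * (β * q5 ^ j) := by ring
        have h3 : 10 * (β * q5 ^ j) ≤ (j + 1) * 5 * (β * q5 ^ j) :=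
          Nat.mul_le_mul_right _ (by omega)
        linarith only [h1, h2, h3]
      have hsplit : β * (q5 ^ (j + 1) + 64 ^ (j + 1)) =
          β * q5 ^ (j + 1) + β * 64 ^ (j + 1) := by ring
      linarith only [c1, c2, c3, c4, c5, hsplit]
    -- ===== final assembly =====
    have hmain := hα n hn8
    rw [← hL, ← hc7] at hmain
    have hA2 : 2 * (α * f (j + 2) c7) ≤ 2 ^ (β * P ^ (j + 1)) := by
      calc 2 * (α * f (j + 2) c7) ≤ 2 * (2 ^ α * 2 ^ (β * q1 ^ (j + 1))) :=
            Nat.mul_le_mul_left 2 (Nat.mul_le_mul (Nat.lt_two_pow_self (n := α)).le hA)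
        _ = 2 ^ (1 + α + β * q1 ^ (j + 1)) := by rw [pow_add, pow_add]; ring
        _ ≤ 2 ^ (β * P ^ (j + 1)) := Nat.pow_le_pow_right (by norm_num) hexpA
    have hS2 : 2 * (α * ((f (j + 1) (2 * n ^ (j + 1))) ^ 2 *
        ∑ u ∈ Finset.range (L - 2),
          f (j + 2) (2 ^ (u + 1)) * f (j + 2) ((n + 2 ^ (u + 1) - 1) / 2 ^ (u + 1) + 1))) ≤
        2 ^ (β * P ^ (j + 1)) := by
      calc 2 * (α * ((f (j + 1) (2 * n ^ (j + 1))) ^ 2 *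
          ∑ u ∈ Finset.range (L - 2),
            f (j + 2) (2 ^ (u + 1)) * f (j + 2) ((n + 2 ^ (u + 1) - 1) / 2 ^ (u + 1) + 1)))
          ≤ 2 * (2 ^ α * (2 ^ (2 * β' * ((6 * (j + 1)) ^ j * P ^ j)) *
              (2 ^ P * 2 ^ (β * (q5 ^ (j + 1) + 64 ^ (j + 1)))))) := by
            exact Nat.mul_le_mul_left 2 (Nat.mul_le_mul (Nat.lt_two_pow_self (n := α)).le
              (Nat.mul_le_mul hB2 hS))
        _ = 2 ^ (1 + α + (2 * β' * ((6 * (j + 1)) ^ j * P ^ j) +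
              (P + β * (q5 ^ (j + 1) + 64 ^ (j + 1))))) := by
            rw [pow_add, pow_add, pow_add, pow_add]; ring
        _ ≤ 2 ^ (β * P ^ (j + 1)) := Nat.pow_le_pow_right (by norm_num) hexpS
    have hfin := hmain
    rw [Nat.mul_add] at hfin
    have hgoal : f (j + 2) n ≤ 2 ^ (β * P ^ (j + 1)) := by
      linarith only [hfin, hA2, hS2]
    exact hgoal

/-- Suppose `f 2, f 3, …` are functions from the positive integers to
the positive integers such that: (i) `f 2 n ≤ n` for all `n ≥ 1`; (ii) `f d 1 = 1` for
all `d ≥ 2`; and (iii) for every `d ≥ 3` there is `α ∈ ℕ` such that for every `n ≥ 8`,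
`f d n ≤ α * (f d ⌈7n/8⌉ + f (d-1) (2n^(d-1))^2 * Σ_{u=0}^{⌊log₂ n⌋ - 3} f d (2^(u+1)) * f d (⌈n / 2^(u+1)⌉ + 1))`.
Then for every `d ≥ 2` there is `β ∈ ℕ` with `f d n ≤ 2 ^ (β * (log₂ n)^(d-1))` for all
positive `n`.  (Ceilings of quotients of naturals are written via `(a + b - 1) / b`;
the sum over `u = 0, …, ⌊log₂ n⌋ - 3` is a sum over `Finset.range (Nat.log 2 n - 2)`,
which agrees since `Nat.log 2 n ≥ 3` for `n ≥ 8`.) -/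
theorem recurrence_solution (f : ℕ → ℕ → ℕ)
    (hpos : ∀ d n : ℕ, 2 ≤ d → 1 ≤ n → 1 ≤ f d n)
    (hf2 : ∀ n : ℕ, 1 ≤ n → f 2 n ≤ n)
    (hf1 : ∀ d : ℕ, 2 ≤ d → f d 1 = 1)
    (hrec : ∀ d : ℕ, 3 ≤ d → ∃ α : ℕ, ∀ n : ℕ, 8 ≤ n →
      f d n ≤ α * (f d ((7 * n + 7) / 8) +
        (f (d - 1) (2 * n ^ (d - 1))) ^ 2 *
          ∑ u ∈ Finset.range (Nat.log 2 n - 2),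
            f d (2 ^ (u + 1)) * f d ((n + 2 ^ (u + 1) - 1) / 2 ^ (u + 1) + 1))) :
    ∀ d : ℕ, 2 ≤ d → ∃ β : ℕ, ∀ n : ℕ, 1 ≤ n →
      (f d n : ℝ) ≤ 2 ^ ((β : ℝ) * Real.logb 2 (n : ℝ) ^ (d - 1)) := by
  have main : ∀ d : ℕ, 2 ≤ d → ∃ β : ℕ, ∀ n : ℕ, 1 ≤ n →
      f d n ≤ 2 ^ (β * (Nat.log 2 (n ^ 6) + 1) ^ (d - 1)) := by
    intro d hd
    induction d, hd using Nat.le_induction with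
    | base =>
      refine ⟨1, fun n hn => ?_⟩
      have h1 : f 2 n ≤ n := hf2 n hn
      have h2 : n < 2 ^ (Nat.log 2 n + 1) := Nat.lt_pow_succ_log_self one_lt_two n
      have h3 : Nat.log 2 n + 1 ≤ Nat.log 2 (n ^ 6) + 1 := by
        have := Nat.log_mono_right (b := 2) (Nat.le_self_pow ((by norm_num : (6:ℕ) ≠ 0)) n)
        omega
      have h4 : (2:ℕ) ^ (Nat.log 2 n + 1) ≤ 2 ^ (Nat.log 2 (n ^ 6) + 1) :=
        Nat.pow_le_pow_right (by norm_num) h3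
      simpa using (h1.trans h2.le).trans h4
    | succ d hd ih =>
      obtain ⟨β', ihb⟩ := ih
      obtain ⟨j, rfl⟩ : ∃ j, d = j + 1 := ⟨d - 1, by omega⟩
      obtain ⟨α, hα⟩ := hrec (j + 1 + 1) (by omega)
      simp only [Nat.add_sub_cancel] at ihb hα ⊢
      exact ⟨α + 2 * β' * (12 * (j + 1)) ^ j +
        (Finset.range (2 ^ 684)).sup (f (j + 2)) + 3,
        step_lemma f j (by omega) β' α ihb hα⟩
  intro d hd
  obtain ⟨β, hb⟩ := main d hd
  refine ⟨β * 12 ^ (d - 1), fun n hn => ?_⟩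
  rcases eq_or_lt_of_le hn with h1 | h2
  · subst h1
    rw [hf1 d hd]
    simp [Real.logb_one, zero_pow (show d - 1 ≠ 0 by omega)]
  · have h2' : 2 ≤ n := h2
    have hL1 : (1:ℝ) ≤ Real.logb 2 (n:ℝ) := by
      rw [← Real.logb_self_eq_one (b := (2:ℝ)) (by norm_num)]
      exact Real.logb_le_logb_of_le (by norm_num) (by norm_num) (by exact_mod_cast h2')
    have hLlog : ((Nat.log 2 n : ℕ) : ℝ) ≤ Real.logb 2 (n:ℝ) := by
      calc ((Nat.log 2 n : ℕ) : ℝ) = Real.logb 2 ((2:ℝ) ^ ((Nat.log 2 n : ℕ):ℝ)) := by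
            rw [Real.logb_rpow (by norm_num) (by norm_num)]
        _ = Real.logb 2 ((2:ℝ) ^ (Nat.log 2 n : ℕ)) := by rw [Real.rpow_natCast]
        _ ≤ Real.logb 2 (n:ℝ) := by
            apply Real.logb_le_logb_of_le (by norm_num) (by positivity)
            exact_mod_cast Nat.pow_log_le_self 2 (by omega)
    have hphi : Nat.log 2 (n ^ 6) + 1 ≤ 6 * Nat.log 2 n + 6 := by
      have h := Nat.lt_pow_succ_log_self (b := 2) one_lt_two n
      have h6 : n ^ 6 < 2 ^ (6 * (Nat.log 2 n + 1)) := by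
        calc n ^ 6 < (2 ^ (Nat.log 2 n + 1)) ^ 6 := Nat.pow_lt_pow_left h (by norm_num)
          _ = 2 ^ (6 * (Nat.log 2 n + 1)) := by rw [← pow_mul, mul_comm]
      have := Nat.log_lt_of_lt_pow (show n ^ 6 ≠ 0 by positivity) h6
      omega
    have hnat := hb n hn
    have hcast : (f d n : ℝ) ≤ (2:ℝ) ^ ((β * (Nat.log 2 (n ^ 6) + 1) ^ (d - 1) : ℕ) : ℝ) := by
      rw [Real.rpow_natCast]
      exact_mod_cast hnat
    refine hcast.trans (Real.rpow_le_rpow_of_exponent_le one_le_two ?_)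
    push_cast
    have key : ((Nat.log 2 (n ^ 6) : ℕ) : ℝ) + 1 ≤ 12 * Real.logb 2 (n:ℝ) := by
      have hc : ((Nat.log 2 (n ^ 6) : ℕ) : ℝ) + 1 ≤ 6 * ((Nat.log 2 n : ℕ) : ℝ) + 6 := by
        exact_mod_cast hphi
      nlinarith
    calc (β:ℝ) * (((Nat.log 2 (n ^ 6) : ℕ):ℝ) + 1) ^ (d - 1)
        ≤ (β:ℝ) * (12 * Real.logb 2 (n:ℝ)) ^ (d - 1) := by
          apply mul_le_mul_of_nonneg_left _ (Nat.cast_nonneg β)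
          exact pow_le_pow_left₀ (by positivity) key _
      _ = (β:ℝ) * 12 ^ (d - 1) * Real.logb 2 (n:ℝ) ^ (d - 1) := by
          rw [mul_pow]; ring
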